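/- Let d, n ≥ 1, let X ⊆ ℂ^d be a nonempty connected open set, and let g : X → ℂ^n be a holomorphic map which is non-constant and whose image g(X) is bounded. Then for every compact set M ⊆ X and every ε > 0 there exists a holomorphic map h : X → ℂ^n such that h(X) is dense in ℂ^n and sup_{x ∈ M} ‖g(x) − h(x)‖ < ε. -/

import Mathlib

set_option linter.unusedSectionVars false

open Metric Set

namespace Stmt3Aux

variable {V : Type*} [NormedAddCommGroup V] [NormedSpace ℂ V] [CompleteSpace V]

variable (τ : ℂ) (Y : Set ℂ)

/-- exhaustion of `ℂ \ {τ}` by compact sets -/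
def Aset (p : ℕ) : Set ℂ := {t | ((p : ℝ) + 1)⁻¹ ≤ ‖t - τ‖ ∧ ‖t‖ ≤ (p : ℝ) + 1}

lemma Aset_mono {p q : ℕ} (h : p ≤ q) : Aset τ p ⊆ Aset τ q := by
  intro t ht
  have h' : (p:ℝ) + 1 ≤ (q:ℝ) + 1 := by
    have : (p:ℝ) ≤ (q:ℝ) := Nat.cast_le.mpr h
    linarith
  exact ⟨le_trans (inv_anti₀ (by positivity) h') ht.1, le_trans ht.2 h'⟩

lemma exists_Aset_superset {C : Set ℂ} (hC : IsCompact C) (hCτ : C ⊆ {τ}ᶜ) :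
    ∃ p : ℕ, C ⊆ Aset τ p := by
  have hcover : C ⊆ ⋃ p : ℕ, {t : ℂ | ((p : ℝ) + 1)⁻¹ < ‖t - τ‖ ∧ ‖t‖ < (p : ℝ) + 1} := by
    intro t ht
    have htτ : t ≠ τ := hCτ ht
    have h1 : 0 < ‖t - τ‖ := by simpa [sub_eq_zero] using htτ
    obtain ⟨p, hp⟩ := exists_nat_gt (max (‖t - τ‖⁻¹) ‖t‖)
    refine mem_iUnion.mpr ⟨p, ?_, ?_⟩
    · have : ‖t - τ‖⁻¹ < (p:ℝ) + 1 := by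
        have := (max_le_iff.mp hp.le).1; linarith
      calc ((p:ℝ)+1)⁻¹ < (‖t - τ‖⁻¹)⁻¹ := by
            exact inv_strictAnti₀ (by positivity) this
        _ = ‖t - τ‖ := inv_inv _
    · have := (max_le_iff.mp hp.le).2; linarith
  obtain ⟨s, hs⟩ := hC.elim_finite_subcover
    (fun p : ℕ => {t : ℂ | ((p : ℝ) + 1)⁻¹ < ‖t - τ‖ ∧ ‖t‖ < (p : ℝ) + 1})
    (fun p => by
      apply IsOpen.inter
      · exact isOpen_lt continuous_const (continuous_norm.comp (continuous_id.sub continuous_const))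
      · exact isOpen_lt continuous_norm continuous_const)
    hcover
  refine ⟨s.sup id, fun t ht => ?_⟩
  have := hs ht
  simp only [mem_iUnion, mem_setOf_eq] at this
  obtain ⟨p, hp, hpt⟩ := this
  have hps : p ≤ s.sup id := Finset.le_sup (f := id) hp
  exact Aset_mono τ hps ⟨hpt.1.le, hpt.2.le⟩


noncomputable def pick (hτc : τ ∈ closure Y) {r : ℝ} (hr : 0 < r) :
    {t : ℂ // t ∈ Y ∧ ‖t - τ‖ < r} := by
  have : ∃ t : ℂ, t ∈ Y ∧ ‖t - τ‖ < r := by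
    obtain ⟨b, hb, hd⟩ := Metric.mem_closure_iff.mp hτc r hr
    exact ⟨b, hb, by rwa [← dist_eq_norm, dist_comm]⟩
  exact ⟨this.choose, this.choose_spec⟩

lemma mem_Y_dist_pos (hτn : τ ∉ Y) {t : ℂ} (ht : t ∈ Y) : 0 < ‖t - τ‖ := by
  have : t ≠ τ := fun h => hτn (h ▸ ht)
  simpa [sub_eq_zero] using this

/-- radius bounds -/
noncomputable def rr (m₀ m : ℕ) : ℝ := ((m₀ : ℝ) + m + 2)⁻¹

lemma rr_pos (m₀ m : ℕ) : 0 < rr m₀ m := by unfold rr; positivity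

noncomputable def seq (m₀ : ℕ) (hτc : τ ∈ closure Y) (hτn : τ ∉ Y) :
    (m : ℕ) → {t : ℂ // t ∈ Y ∧ ‖t - τ‖ < rr m₀ m}
  | 0 => pick τ Y hτc (rr_pos m₀ 0)
  | m + 1 =>
      let prev := seq m₀ hτc hτn m
      let h := pick τ Y hτc
        (lt_min (rr_pos m₀ (m+1)) (mem_Y_dist_pos τ Y hτn prev.2.1))
      ⟨h.1, h.2.1, lt_of_lt_of_le h.2.2 (min_le_left _ _)⟩

variable (m₀ : ℕ) (hτc : τ ∈ closure Y) (hτn : τ ∉ Y)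

/-- the interpolation points -/
noncomputable def ts (m : ℕ) : ℂ := (seq τ Y m₀ hτc hτn m).1

lemma ts_mem (m : ℕ) : ts τ Y m₀ hτc hτn m ∈ Y := (seq τ Y m₀ hτc hτn m).2.1

lemma ts_close (m : ℕ) : ‖ts τ Y m₀ hτc hτn m - τ‖ < rr m₀ m :=
  (seq τ Y m₀ hτc hτn m).2.2

lemma ts_dist_pos (m : ℕ) : 0 < ‖ts τ Y m₀ hτc hτn m - τ‖ :=
  mem_Y_dist_pos τ Y hτn (ts_mem τ Y m₀ hτc hτn m)

lemma ts_ne (m : ℕ) : ts τ Y m₀ hτc hτn m ≠ τ := by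
  have h := ts_dist_pos τ Y m₀ hτc hτn m
  intro he; rw [he] at h; simp at h

lemma ts_succ_lt (m : ℕ) :
    ‖ts τ Y m₀ hτc hτn (m+1) - τ‖ < ‖ts τ Y m₀ hτc hτn m - τ‖ := by
  have h : ts τ Y m₀ hτc hτn (m+1) =
      (pick τ Y hτc (lt_min (rr_pos m₀ (m+1))
        (mem_Y_dist_pos τ Y hτn (seq τ Y m₀ hτc hτn m).2.1))).1 := rfl
  have h2 := (pick τ Y hτc (lt_min (rr_pos m₀ (m+1))
        (mem_Y_dist_pos τ Y hτn (seq τ Y m₀ hτc hτn m).2.1))).2.2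
  rw [← h] at h2
  exact lt_of_lt_of_le h2 (min_le_right _ _)

lemma ts_anti : StrictAnti (fun m => ‖ts τ Y m₀ hτc hτn m - τ‖) :=
  strictAnti_nat_of_succ_lt (ts_succ_lt τ Y m₀ hτc hτn)


/-- the function `u` with pole at `τ` -/
noncomputable def uf (t : ℂ) : ℂ := (t - τ)⁻¹

/-- values of `u` at the interpolation points -/
noncomputable def uu (m : ℕ) : ℂ := uf τ (ts τ Y m₀ hτc hτn m)

lemma uu_norm (m : ℕ) : ‖uu τ Y m₀ hτc hτn m‖ = ‖ts τ Y m₀ hτc hτn m - τ‖⁻¹ := by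
  simp [uu, uf]

lemma uu_norm_gt (m : ℕ) : (m₀ : ℝ) + m + 2 < ‖uu τ Y m₀ hτc hτn m‖ := by
  rw [uu_norm]
  have h1 := ts_close τ Y m₀ hτc hτn m
  have h2 := ts_dist_pos τ Y m₀ hτc hτn m
  have h3 : (0:ℝ) < (m₀ : ℝ) + m + 2 := by positivity
  calc (m₀ : ℝ) + m + 2 = (rr m₀ m)⁻¹ := by rw [rr, inv_inv]
    _ < ‖ts τ Y m₀ hτc hτn m - τ‖⁻¹ := by
        exact inv_strictAnti₀ h2 h1

lemma uu_norm_lt {k m : ℕ} (h : k < m) :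
    ‖uu τ Y m₀ hτc hτn k‖ < ‖uu τ Y m₀ hτc hτn m‖ := by
  rw [uu_norm, uu_norm]
  exact inv_strictAnti₀ (ts_dist_pos τ Y m₀ hτc hτn m) (ts_anti τ Y m₀ hτc hτn h)

lemma uu_ne {k m : ℕ} (h : k < m) :
    uu τ Y m₀ hτc hτn m ≠ uu τ Y m₀ hτc hτn k := by
  intro he
  have := uu_norm_lt τ Y m₀ hτc hτn h
  rw [he] at this; exact lt_irrefl _ this

lemma uu_ne_zero (m : ℕ) : uu τ Y m₀ hτc hτn m ≠ 0 := by
  have := uu_norm_gt τ Y m₀ hτc hτn m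
  intro he; rw [he] at this; simp at this
  have : (0:ℝ) ≤ (m₀:ℝ) + m := by positivity
  linarith

/-- the Lagrange-type basis function -/
noncomputable def Pf (m s : ℕ) (t : ℂ) : ℂ :=
  (uf τ t / uu τ Y m₀ hτc hτn m) ^ s *
    ∏ k ∈ Finset.range m, (uf τ t - uu τ Y m₀ hτc hτn k) / (uu τ Y m₀ hτc hτn m - uu τ Y m₀ hτc hτn k)

lemma uf_diff : DifferentiableOn ℂ (uf τ) {τ}ᶜ := by
  apply DifferentiableOn.inv
  · exact (differentiable_id.sub_const τ).differentiableOn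
  · intro t ht; simpa [sub_eq_zero] using ht

lemma Pf_diff (m s : ℕ) : DifferentiableOn ℂ (Pf τ Y m₀ hτc hτn m s) {τ}ᶜ := by
  apply DifferentiableOn.mul
  · exact ((uf_diff τ).div_const _).pow s
  · apply DifferentiableOn.fun_finsetProd
    intro k _
    exact ((uf_diff τ).sub_const _).div_const _

lemma Pf_self (m s : ℕ) : Pf τ Y m₀ hτc hτn m s (ts τ Y m₀ hτc hτn m) = 1 := by
  unfold Pf
  have h1 : uf τ (ts τ Y m₀ hτc hτn m) = uu τ Y m₀ hτc hτn m := rfl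
  rw [h1, div_self (uu_ne_zero τ Y m₀ hτc hτn m), one_pow, one_mul]
  apply Finset.prod_eq_one
  intro k hk
  apply div_self
  exact sub_ne_zero.mpr (uu_ne τ Y m₀ hτc hτn (Finset.mem_range.mp hk))

lemma Pf_zero {k m : ℕ} (h : k < m) (s : ℕ) :
    Pf τ Y m₀ hτc hτn m s (ts τ Y m₀ hτc hτn k) = 0 := by
  unfold Pf
  rw [Finset.prod_eq_zero (Finset.mem_range.mpr h), mul_zero]
  have h1 : uf τ (ts τ Y m₀ hτc hτn k) = uu τ Y m₀ hτc hτn k := rfl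
  rw [h1, sub_self, zero_div]

lemma Pf_bound (m : ℕ) {η : ℝ} (hη : 0 < η) :
    ∃ s : ℕ, ∀ t ∈ Aset τ (m₀ + m), ‖Pf τ Y m₀ hτc hτn m s t‖ ≤ η := by
  set a : ℝ := ((m₀ + m : ℕ) : ℝ) + 1 with ha
  have ha' : a = (m₀ : ℝ) + m + 1 := by rw [ha]; push_cast; ring
  set b : ℝ := ‖uu τ Y m₀ hτc hτn m‖ with hb
  have hab : a + 1 < b := by
    rw [ha']; have := uu_norm_gt τ Y m₀ hτc hτn m; linarith
  have ha0 : (0:ℝ) < a := by rw [ha']; positivity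
  have hb0 : (0:ℝ) < b := by linarith
  set C : ℝ := ∏ k ∈ Finset.range m,
    (a + ‖uu τ Y m₀ hτc hτn k‖) / ‖uu τ Y m₀ hτc hτn m - uu τ Y m₀ hτc hτn k‖ with hC
  have hC0 : 0 < C := by
    apply Finset.prod_pos
    intro k hk
    apply div_pos
    · have := norm_nonneg (uu τ Y m₀ hτc hτn k); linarith
    · rw [norm_pos_iff]
      exact sub_ne_zero.mpr (uu_ne τ Y m₀ hτc hτn (Finset.mem_range.mp hk))
  have key : ∀ s : ℕ, ∀ t ∈ Aset τ (m₀ + m), ‖Pf τ Y m₀ hτc hτn m s t‖ ≤ (a/b)^s * C := by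
    intro s t ht
    have hu : ‖uf τ t‖ ≤ a := by
      have h1 : ((m₀ + m : ℕ) : ℝ) + 1 = a := ha.symm
      have h2 := ht.1
      rw [h1] at h2
      have : ‖uf τ t‖ = ‖t - τ‖⁻¹ := by simp [uf]
      rw [this]
      calc ‖t - τ‖⁻¹ ≤ (a⁻¹)⁻¹ := inv_anti₀ (by positivity) h2
        _ = a := inv_inv a
    unfold Pf
    rw [norm_mul, norm_pow]
    have h1 : ‖uf τ t / uu τ Y m₀ hτc hτn m‖ ^ s ≤ (a/b)^s := by
      apply pow_le_pow_left₀ (norm_nonneg _)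
      rw [norm_div, ← hb]
      gcongr
    have h2 : ‖∏ k ∈ Finset.range m,
        (uf τ t - uu τ Y m₀ hτc hτn k) / (uu τ Y m₀ hτc hτn m - uu τ Y m₀ hτc hτn k)‖ ≤ C := by
      rw [norm_prod, hC]
      apply Finset.prod_le_prod
      · intro k _; positivity
      · intro k _
        rw [norm_div]
        gcongr
        exact (norm_sub_le _ _).trans (by gcongr)
    exact mul_le_mul h1 h2 (norm_nonneg _) (by positivity)
  obtain ⟨s, hs⟩ := exists_pow_lt_of_lt_one (div_pos hη hC0) (show a/b < 1 by
    rw [div_lt_one hb0]; linarith)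
  refine ⟨s, fun t ht => le_of_lt ?_⟩
  calc ‖Pf τ Y m₀ hτc hτn m s t‖ ≤ (a/b)^s * C := key s t ht
    _ < (η / C) * C := by
        apply mul_lt_mul_of_pos_right hs hC0
    _ = η := div_mul_cancel₀ η (ne_of_gt hC0)


section Rec

variable (val : ℕ → ℂ → V) (ε : ℝ)

noncomputable def ηfun (m : ℕ) (v : V) : ℝ := ε * (2:ℝ)⁻¹ ^ (m+2) / (‖v‖ + 1)

lemma ηfun_pos (hε : 0 < ε) (m : ℕ) (v : V) : 0 < ηfun ε m v := by
  unfold ηfun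
  have h1 : (0:ℝ) < ‖v‖ + 1 := by positivity
  positivity

variable (hε : 0 < ε)

noncomputable def Φv (prev : ℕ → V × ℕ) (m : ℕ) : V :=
  val m (ts τ Y m₀ hτc hτn m) -
    ∑ k ∈ Finset.range m, Pf τ Y m₀ hτc hτn k (prev k).2 (ts τ Y m₀ hτc hτn m) • (prev k).1

noncomputable def Φs (prev : ℕ → V × ℕ) (m : ℕ) : ℕ :=
  (Pf_bound τ Y m₀ hτc hτn m (ηfun_pos ε hε m (Φv τ Y m₀ hτc hτn val prev m))).choose

noncomputable def Φ (prev : ℕ → V × ℕ) (m : ℕ) : V × ℕ :=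
  (Φv τ Y m₀ hτc hτn val prev m, Φs τ Y m₀ hτc hτn val ε hε prev m)

noncomputable def Hh : ℕ → ℕ → V × ℕ
  | 0 => fun _ => (0, 0)
  | m + 1 => Function.update (Hh m) m (Φ τ Y m₀ hτc hτn val ε hε (Hh m) m)

noncomputable def vs (m : ℕ) : V × ℕ := Hh τ Y m₀ hτc hτn val ε hε (m+1) m

noncomputable def Gm (m : ℕ) (t : ℂ) : V :=
  Pf τ Y m₀ hτc hτn m (vs τ Y m₀ hτc hτn val ε hε m).2 t • (vs τ Y m₀ hτc hτn val ε hε m).1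

lemma Φv_congr {prev prev' : ℕ → V × ℕ} {m : ℕ} (h : ∀ k < m, prev k = prev' k) :
    Φv τ Y m₀ hτc hτn val prev m = Φv τ Y m₀ hτc hτn val prev' m := by
  unfold Φv
  congr 1
  apply Finset.sum_congr rfl
  intro k hk
  rw [h k (Finset.mem_range.mp hk)]

lemma Φ_congr {prev prev' : ℕ → V × ℕ} {m : ℕ} (h : ∀ k < m, prev k = prev' k) :
    Φ τ Y m₀ hτc hτn val ε hε prev m = Φ τ Y m₀ hτc hτn val ε hε prev' m := by
  have hvv := Φv_congr τ Y m₀ hτc hτn val (prev := prev) (prev' := prev') h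
  have h2 : ∀ v v' : V, v = v' →
      ((Pf_bound τ Y m₀ hτc hτn m (ηfun_pos ε hε m v)).choose : ℕ) =
        (Pf_bound τ Y m₀ hτc hτn m (ηfun_pos ε hε m v')).choose := by
    intro v v' hv; subst hv; rfl
  unfold Φ Φs
  rw [Prod.mk.injEq]
  exact ⟨hvv, h2 _ _ hvv⟩

lemma vs_def (m : ℕ) :
    vs τ Y m₀ hτc hτn val ε hε m =
      Φ τ Y m₀ hτc hτn val ε hε (Hh τ Y m₀ hτc hτn val ε hε m) m := by
  show Function.update (Hh τ Y m₀ hτc hτn val ε hε m) m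
      (Φ τ Y m₀ hτc hτn val ε hε (Hh τ Y m₀ hτc hτn val ε hε m) m) m = _
  rw [Function.update_self]

lemma Hh_lt : ∀ m k, k < m →
    Hh τ Y m₀ hτc hτn val ε hε m k = vs τ Y m₀ hτc hτn val ε hε k := by
  intro m
  induction m with
  | zero => intro k hk; omega
  | succ m ih =>
      intro k hk
      rcases Nat.lt_succ_iff_lt_or_eq.mp hk with h | h
      · show Function.update (Hh τ Y m₀ hτc hτn val ε hε m) m
            (Φ τ Y m₀ hτc hτn val ε hε (Hh τ Y m₀ hτc hτn val ε hε m) m) k = _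
        rw [Function.update_of_ne (by omega)]
        exact ih k h
      · subst h
        show Function.update (Hh τ Y m₀ hτc hτn val ε hε k) k
            (Φ τ Y m₀ hτc hτn val ε hε (Hh τ Y m₀ hτc hτn val ε hε k) k) k = _
        rw [Function.update_self]
        exact (vs_def τ Y m₀ hτc hτn val ε hε k).symm

lemma vs_eq (m : ℕ) :
    vs τ Y m₀ hτc hτn val ε hε m =
      Φ τ Y m₀ hτc hτn val ε hε (vs τ Y m₀ hτc hτn val ε hε) m := by
  rw [vs_def τ Y m₀ hτc hτn val ε hε m]
  exact Φ_congr τ Y m₀ hτc hτn val ε hε (fun k hk => Hh_lt τ Y m₀ hτc hτn val ε hε m k hk)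

lemma vs_fst (m : ℕ) :
    (vs τ Y m₀ hτc hτn val ε hε m).1 =
      Φv τ Y m₀ hτc hτn val (vs τ Y m₀ hτc hτn val ε hε) m := by
  rw [vs_eq]; rfl

lemma vs_snd (m : ℕ) :
    (vs τ Y m₀ hτc hτn val ε hε m).2 =
      Φs τ Y m₀ hτc hτn val ε hε (vs τ Y m₀ hτc hτn val ε hε) m := by
  rw [vs_eq]; rfl

lemma Gm_self (m : ℕ) :
    Gm τ Y m₀ hτc hτn val ε hε m (ts τ Y m₀ hτc hτn m) =
      val m (ts τ Y m₀ hτc hτn m) -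
        ∑ k ∈ Finset.range m, Gm τ Y m₀ hτc hτn val ε hε k (ts τ Y m₀ hτc hτn m) := by
  unfold Gm
  rw [Pf_self, one_smul, vs_fst]
  rfl

lemma Gm_zero {k m : ℕ} (h : k < m) :
    Gm τ Y m₀ hτc hτn val ε hε m (ts τ Y m₀ hτc hτn k) = 0 := by
  unfold Gm
  rw [Pf_zero τ Y m₀ hτc hτn h, zero_smul]

lemma Gm_small (m : ℕ) : ∀ t ∈ Aset τ (m₀ + m),
    ‖Gm τ Y m₀ hτc hτn val ε hε m t‖ ≤ ε * (2:ℝ)⁻¹ ^ (m+2) := by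
  intro t ht
  unfold Gm
  rw [norm_smul]
  set v : V := (vs τ Y m₀ hτc hτn val ε hε m).1 with hv
  have hs : (vs τ Y m₀ hτc hτn val ε hε m).2 =
      (Pf_bound τ Y m₀ hτc hτn m (ηfun_pos ε hε m
        (Φv τ Y m₀ hτc hτn val (vs τ Y m₀ hτc hτn val ε hε) m))).choose :=
    vs_snd τ Y m₀ hτc hτn val ε hε m
  have hvΦ : Φv τ Y m₀ hτc hτn val (vs τ Y m₀ hτc hτn val ε hε) m = v :=
    (vs_fst τ Y m₀ hτc hτn val ε hε m).symm
  rw [hs]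
  have hspec := (Pf_bound τ Y m₀ hτc hτn m (ηfun_pos ε hε m
        (Φv τ Y m₀ hτc hτn val (vs τ Y m₀ hτc hτn val ε hε) m))).choose_spec t ht
  rw [hvΦ] at hspec
  calc ‖Pf τ Y m₀ hτc hτn m _ t‖ * ‖v‖ ≤ ηfun ε m v * ‖v‖ := by
        apply mul_le_mul_of_nonneg_right _ (norm_nonneg v)
        convert hspec using 2
        rfl
        rw [hvΦ]
      _ ≤ ε * (2:ℝ)⁻¹ ^ (m+2) := by
        unfold ηfun
        rw [div_mul_eq_mul_div, div_le_iff₀ (by positivity)]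
        have h1 : (0:ℝ) ≤ ε * (2:ℝ)⁻¹ ^ (m+2) := by positivity
        nlinarith [norm_nonneg v]

noncomputable def Ff (t : ℂ) : V := ∑' m, Gm τ Y m₀ hτc hτn val ε hε m t

lemma bound_summable (p : ℕ) : Summable (fun m : ℕ => ε * (2:ℝ)⁻¹ ^ (m + p + 2)) := by
  have h : ∀ m : ℕ, ε * (2:ℝ)⁻¹ ^ (m + p + 2) = (ε * (2:ℝ)⁻¹ ^ (p+2)) * (2:ℝ)⁻¹ ^ m := by
    intro m; ring
  apply Summable.congr _ (fun m => (h m).symm)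
  exact (summable_geometric_of_lt_one (by norm_num) (by norm_num)).mul_left _

lemma Gm_summable {p : ℕ} {t : ℂ} (ht : t ∈ Aset τ (m₀ + p)) :
    Summable (fun m => Gm τ Y m₀ hτc hτn val ε hε m t) := by
  apply (summable_nat_add_iff p).mp
  apply Summable.of_norm_bounded (bound_summable ε p)
  intro m
  exact Gm_small τ Y m₀ hτc hτn val ε hε (m+p) t
    (Aset_mono τ (by omega) ht)

lemma Gm_norm_summable {p : ℕ} {t : ℂ} (ht : t ∈ Aset τ (m₀ + p)) :
    Summable (fun m => ‖Gm τ Y m₀ hτc hτn val ε hε m t‖) := by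
  apply (summable_nat_add_iff p).mp
  apply Summable.of_nonneg_of_le (fun m => norm_nonneg _) _ (bound_summable ε p)
  intro m
  exact Gm_small τ Y m₀ hτc hτn val ε hε (m+p) t (Aset_mono τ (by omega) ht)

lemma Ff_small {t : ℂ} (ht : t ∈ Aset τ m₀) :
    ‖Ff τ Y m₀ hτc hτn val ε hε t‖ ≤ ε / 2 := by
  have ht0 : t ∈ Aset τ (m₀ + 0) := by simpa using ht
  have h1 := norm_tsum_le_tsum_norm (Gm_norm_summable τ Y m₀ hτc hτn val ε hε ht0)
  refine h1.trans ?_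
  have h2 : ∀ m : ℕ, ‖Gm τ Y m₀ hτc hτn val ε hε m t‖ ≤ ε * (2:ℝ)⁻¹ ^ (m + 2) := by
    intro m
    exact Gm_small τ Y m₀ hτc hτn val ε hε m t (Aset_mono τ (by omega) ht0)
  have h3 := Summable.tsum_le_tsum h2 (Gm_norm_summable τ Y m₀ hτc hτn val ε hε ht0)
    (by simpa using bound_summable ε 0)
  refine h3.trans ?_
  have h4 : ∀ m : ℕ, ε * (2:ℝ)⁻¹ ^ (m + 2) = (ε * (2:ℝ)⁻¹ ^ 2) * (2:ℝ)⁻¹ ^ m := by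
    intro m; ring
  rw [tsum_congr h4, tsum_mul_left, tsum_geometric_of_lt_one (by norm_num) (by norm_num)]
  norm_num
  linarith

lemma Gm_diff (m : ℕ) : DifferentiableOn ℂ (Gm τ Y m₀ hτc hτn val ε hε m) {τ}ᶜ := by
  unfold Gm
  exact (Pf_diff τ Y m₀ hτc hτn m _).smul_const _

lemma Ff_diff : DifferentiableOn ℂ (Ff τ Y m₀ hτc hτn val ε hε) {τ}ᶜ := by
  apply differentiableOn_of_locally_differentiableOn
  intro t₀ ht₀
  have ht₀' : t₀ ≠ τ := ht₀
  have hpos : 0 < ‖t₀ - τ‖ := by simpa [sub_eq_zero] using ht₀'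
  obtain ⟨p, hp⟩ := exists_nat_gt (max (‖t₀ - τ‖⁻¹) ‖t₀‖)
  set q : ℕ := m₀ + p with hq
  have hq1 : ‖t₀ - τ‖⁻¹ < (q:ℝ) + 1 := by
    have := (max_le_iff.mp hp.le).1
    have hpq : (p:ℝ) ≤ (q:ℝ) := by
      exact_mod_cast Nat.cast_le.mpr (show p ≤ m₀ + p from Nat.le_add_left p m₀)
    linarith
  have hq2 : ‖t₀‖ < (q:ℝ) + 1 := by
    have := (max_le_iff.mp hp.le).2
    have hpq : (p:ℝ) ≤ (q:ℝ) := by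
      exact_mod_cast Nat.cast_le.mpr (show p ≤ m₀ + p from Nat.le_add_left p m₀)
    linarith
  set O : Set ℂ := {t | ((q:ℝ) + 1)⁻¹ < ‖t - τ‖ ∧ ‖t‖ < (q:ℝ) + 1} with hO
  have hOopen : IsOpen O := by
    apply IsOpen.inter
    · exact isOpen_lt continuous_const (continuous_norm.comp (continuous_id.sub continuous_const))
    · exact isOpen_lt continuous_norm continuous_const
  have ht₀O : t₀ ∈ O := by
    constructor
    · calc ((q:ℝ)+1)⁻¹ < (‖t₀ - τ‖⁻¹)⁻¹ := inv_strictAnti₀ (by positivity) hq1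
        _ = ‖t₀ - τ‖ := inv_inv _
    · exact hq2
  have hOA : O ⊆ Aset τ q := fun t ht => ⟨ht.1.le, ht.2.le⟩
  have hOc : O ⊆ ({τ}ᶜ : Set ℂ) := by
    intro t ht he
    rw [Set.mem_singleton_iff] at he
    subst he
    have h5 := ht.1
    rw [sub_self, norm_zero] at h5
    have h6 : (0:ℝ) < ((q:ℝ)+1)⁻¹ := by positivity
    linarith
  refine ⟨O, hOopen, ht₀O, ?_⟩
  apply DifferentiableOn.mono _ (inter_subset_right)
  -- on O, Ff = finite sum + tail
  have hsum : ∀ t ∈ O, Summable (fun m => Gm τ Y m₀ hτc hτn val ε hε m t) := by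
    intro t ht
    exact Gm_summable τ Y m₀ hτc hτn val ε hε (p := p) (hOA ht)
  have heq : ∀ t ∈ O, Ff τ Y m₀ hτc hτn val ε hε t =
      (∑ k ∈ Finset.range p, Gm τ Y m₀ hτc hτn val ε hε k t) +
        ∑' k, Gm τ Y m₀ hτc hτn val ε hε (k + p) t := by
    intro t ht
    exact (Summable.sum_add_tsum_nat_add p (hsum t ht)).symm
  have hdiff1 : DifferentiableOn ℂ
      (fun t => ∑ k ∈ Finset.range p, Gm τ Y m₀ hτc hτn val ε hε k t) O := by
    apply DifferentiableOn.fun_sum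
    intro k _
    exact (Gm_diff τ Y m₀ hτc hτn val ε hε k).mono hOc
  have hdiff2 : DifferentiableOn ℂ
      (fun t => ∑' k, Gm τ Y m₀ hτc hτn val ε hε (k + p) t) O := by
    have htu := tendstoUniformlyOn_tsum (bound_summable ε p)
      (f := fun k t => Gm τ Y m₀ hτc hτn val ε hε (k + p) t) (s := O) ?_
    · apply htu.tendstoLocallyUniformlyOn.differentiableOn _ hOopen
      apply Filter.Eventually.of_forall
      intro s
      apply DifferentiableOn.fun_sum
      intro k _
      exact (Gm_diff τ Y m₀ hτc hτn val ε hε (k+p)).mono hOc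
    · intro k t ht
      exact Gm_small τ Y m₀ hτc hτn val ε hε (k+p) t
        (Aset_mono τ (by omega) (hOA ht))
  exact (hdiff1.add hdiff2).congr heq

lemma Ff_interp (m : ℕ) :
    Ff τ Y m₀ hτc hτn val ε hε (ts τ Y m₀ hτc hτn m) =
      val m (ts τ Y m₀ hτc hτn m) := by
  unfold Ff
  have hz : ∀ k ∉ Finset.range (m+1),
      Gm τ Y m₀ hτc hτn val ε hε k (ts τ Y m₀ hτc hτn m) = 0 := by
    intro k hk
    have hmk : m < k := by
      by_contra hc
      exact hk (Finset.mem_range.mpr (by omega))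
    exact Gm_zero τ Y m₀ hτc hτn val ε hε hmk
  rw [tsum_eq_sum hz, Finset.sum_range_succ, Gm_self τ Y m₀ hτc hτn val ε hε m]
  abel

end Rec

end Stmt3Aux

open Stmt3Aux in
theorem Stmt3Aux.machine {V : Type*} [NormedAddCommGroup V] [NormedSpace ℂ V] [CompleteSpace V]
    (τ : ℂ) (Y : Set ℂ) (hτc : τ ∈ closure Y) (hτn : τ ∉ Y)
    (val : ℕ → ℂ → V) (ε : ℝ) (hε : 0 < ε) (K : Set ℂ) (hK : IsCompact K)
    (hKτ : K ⊆ {τ}ᶜ) :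
    ∃ (F : ℂ → V) (pts : ℕ → ℂ), DifferentiableOn ℂ F {τ}ᶜ ∧ (∀ t ∈ K, ‖F t‖ ≤ ε / 2) ∧
      ∀ m, pts m ∈ Y ∧ F (pts m) = val m (pts m) := by
  obtain ⟨m₀, hm₀⟩ := exists_Aset_superset τ hK hKτ
  exact ⟨Ff τ Y m₀ hτc hτn val ε hε, ts τ Y m₀ hτc hτn,
    Ff_diff τ Y m₀ hτc hτn val ε hε,
    fun t ht => Ff_small τ Y m₀ hτc hτn val ε hε (hm₀ ht),
    fun m => ⟨ts_mem τ Y m₀ hτc hτn m, Ff_interp τ Y m₀ hτc hτn val ε hε m⟩⟩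

/-- Theorem 1.2 specialized to `Y = ℂ^n`, `X ⊆ ℂ^d` a nonempty connected open set:
any non-constant holomorphic map `g : X → ℂ^n` with bounded image can be approximated,
uniformly on any compact `M ⊆ X` and within any `ε > 0`, by a holomorphic map
`h : X → ℂ^n` with dense image. -/
theorem stmt3
    (d n : ℕ) (hd : 1 ≤ d) (hn : 1 ≤ n)
    (X : Set (EuclideanSpace ℂ (Fin d))) (hXopen : IsOpen X) (hXconn : IsConnected X)
    (g : EuclideanSpace ℂ (Fin d) → EuclideanSpace ℂ (Fin n))
    (hg : DifferentiableOn ℂ g X)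
    (hgnc : ¬ ∃ c, ∀ x ∈ X, g x = c)
    (hgb : Bornology.IsBounded (g '' X))
    (M : Set (EuclideanSpace ℂ (Fin d))) (hM : IsCompact M) (hMX : M ⊆ X)
    (ε : ℝ) (hε : 0 < ε) :
    ∃ h : EuclideanSpace ℂ (Fin d) → EuclideanSpace ℂ (Fin n),
      DifferentiableOn ℂ h X ∧ Dense (h '' X) ∧ ∀ x ∈ M, ‖g x - h x‖ < ε := by
  classical
  obtain ⟨x₀, hx₀⟩ := hXconn.nonempty
  -- a nonconstant coordinate
  have hnc : ∃ y ∈ X, g y ≠ g x₀ := by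
    by_contra hc
    push_neg at hc
    exact hgnc ⟨g x₀, hc⟩
  obtain ⟨y, hyX, hy⟩ := hnc
  have hj : ∃ j : Fin n, g y j ≠ g x₀ j := by
    by_contra hc
    push_neg at hc
    exact hy (PiLp.ext hc)
  obtain ⟨j, hj⟩ := hj
  set gj : EuclideanSpace ℂ (Fin d) → ℂ := fun z => g z j with hgj_def
  have hgjd : DifferentiableOn ℂ gj X := by
    exact (EuclideanSpace.proj (𝕜 := ℂ) j).differentiable.comp_differentiableOn hg
  set Ω : Set ℂ := gj '' X with hΩ_def
  have hΩb : Bornology.IsBounded Ω := by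
    have h1 : Ω = (EuclideanSpace.proj (𝕜 := ℂ) j) '' (g '' X) := by
      rw [Set.image_image]; rfl
    rw [h1]
    exact ((EuclideanSpace.proj (𝕜 := ℂ) j).lipschitz.isBounded_image hgb)
  have hΩne : Ω.Nonempty := ⟨gj x₀, x₀, hx₀, rfl⟩
  have hcc : IsCompact (closure Ω) := hΩb.isCompact_closure
  obtain ⟨τ, hτcl, hτmax⟩ := hcc.exists_isMaxOn (hΩne.mono subset_closure)
    (Complex.continuous_re.continuousOn)
  have hτn : τ ∉ Ω := by
    intro hτΩ
    obtain ⟨x₁, hx₁X, hx₁⟩ := hτΩ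
    set φ : EuclideanSpace ℂ (Fin d) → ℂ := fun z => Complex.exp (gj z) with hφ_def
    have hφd : DifferentiableOn ℂ φ X := hgjd.cexp
    have hmax : IsMaxOn (norm ∘ φ) X x₁ := by
      intro z hz
      simp only [Function.comp_apply, hφ_def, Complex.norm_exp,
        Set.mem_setOf_eq]
      apply Real.exp_le_exp.mpr
      have h1 : gj z ∈ closure Ω := subset_closure ⟨z, hz, rfl⟩
      have h2 := hτmax h1
      rw [hx₁]
      exact h2
    have heq := Complex.eqOn_of_isPreconnected_of_isMaxOn_norm
      hXconn.isPreconnected hXopen hφd hx₁X hmax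
    -- exp ∘ gj is constant on X; conclude gj constant by a clopen argument
    haveI : PreconnectedSpace ↥X := Subtype.preconnectedSpace hXconn.isPreconnected
    have hgjc : Continuous (fun z : ↥X => gj ↑z) := (hgjd.continuousOn).restrict
    set S : Set ↥X := {z | gj ↑z = gj x₁} with hS_def
    have hSopen : S = (fun z : ↥X => gj ↑z) ⁻¹' (Metric.ball (gj x₁) 1) := by
      ext z
      simp only [hS_def, Set.mem_setOf_eq, Set.mem_preimage, Metric.mem_ball]
      constructor
      · intro he; rw [he]; simpa using one_pos
      · intro hdist
        have hz := heq z.2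
        have hx1 := heq hx₁X
        have hexp : Complex.exp (gj ↑z) = Complex.exp (gj x₁) :=
          (heq z.2).trans (heq hx₁X).symm
        obtain ⟨k, hk⟩ := Complex.exp_eq_exp_iff_exists_int.mp hexp
        have hnorm : ‖gj ↑z - gj x₁‖ = |(k:ℝ)| * (2 * Real.pi) := by
          rw [hk, add_sub_cancel_left, norm_mul, Complex.norm_intCast]
          congr 1
          have hπ : |Real.pi| = Real.pi := abs_of_nonneg Real.pi_pos.le
          simp only [norm_mul, Complex.norm_I, Complex.norm_ofNat, Complex.norm_real,
            Real.norm_eq_abs, hπ, mul_one]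
        by_cases hk0 : k = 0
        · rw [hk, hk0]; simp
        · exfalso
          have h1 : (1:ℝ) ≤ |(k:ℝ)| := by
            have := Int.one_le_abs hk0
            exact_mod_cast this
          have hπ : (3:ℝ) < Real.pi := Real.pi_gt_three
          have h2 : (6:ℝ) ≤ ‖gj ↑z - gj x₁‖ := by
            rw [hnorm]
            nlinarith
          rw [dist_eq_norm] at hdist
          linarith
    have hSclopen : IsClopen S :=
      ⟨isClosed_eq hgjc continuous_const, by rw [hSopen]; exact Metric.isOpen_ball.preimage hgjc⟩
    have hSne : S.Nonempty := ⟨⟨x₁, hx₁X⟩, rfl⟩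
    have hSuniv : S = Set.univ := by
      rcases isClopen_iff.mp hSclopen with h | h
      · exact absurd h (Set.nonempty_iff_ne_empty.mp hSne)
      · exact h
    have hyc : gj y = gj x₁ := by
      have : (⟨y, hyX⟩ : ↥X) ∈ S := hSuniv ▸ Set.mem_univ _
      exact this
    have hx₀c : gj x₀ = gj x₁ := by
      have : (⟨x₀, hx₀⟩ : ↥X) ∈ S := hSuniv ▸ Set.mem_univ _
      exact this
    exact hj (by rw [hgj_def] at hyc hx₀c; exact hyc.trans hx₀c.symm)
  -- preimage chooser
  have hex : ∀ t : ℂ, ∃ z, t ∈ Ω → (z ∈ X ∧ gj z = t) := by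
    intro t
    by_cases h : t ∈ Ω
    · obtain ⟨z, hz, he⟩ := h
      exact ⟨z, fun _ => ⟨hz, he⟩⟩
    · exact ⟨x₀, fun h' => absurd h' h⟩
  choose ζ hζ using hex
  -- dense sequence
  obtain ⟨q, hq⟩ := TopologicalSpace.exists_dense_seq (EuclideanSpace ℂ (Fin n))
  set val : ℕ → ℂ → EuclideanSpace ℂ (Fin n) := fun m t => q m - g (ζ t) with hval_def
  set K : Set ℂ := gj '' M with hK_def
  have hKcpt : IsCompact K := hM.image_of_continuousOn (hgjd.continuousOn.mono hMX)
  have hKτ : K ⊆ ({τ}ᶜ : Set ℂ) := by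
    rintro t ⟨x, hx, rfl⟩ he
    rw [Set.mem_singleton_iff] at he
    exact hτn (he ▸ ⟨x, hMX hx, rfl⟩)
  obtain ⟨F, pts, hFd, hFsmall, hpts⟩ :=
    Stmt3Aux.machine τ Ω hτcl hτn val ε hε K hKcpt hKτ
  refine ⟨fun z => g z + F (gj z), ?_, ?_, ?_⟩
  · apply hg.add
    have hmaps : Set.MapsTo gj X ({τ}ᶜ : Set ℂ) := by
      intro z hz he
      rw [Set.mem_singleton_iff] at he
      exact hτn (he ▸ ⟨z, hz, rfl⟩)
    exact hFd.comp hgjd hmaps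
  · apply hq.mono
    rintro _ ⟨m, rfl⟩
    have h1 := hpts m
    have h2 := hζ (pts m) h1.1
    refine ⟨ζ (pts m), h2.1, ?_⟩
    show g (ζ (pts m)) + F (gj (ζ (pts m))) = q m
    rw [h2.2, h1.2]
    show g (ζ (pts m)) + (q m - g (ζ (pts m))) = q m
    abel
  · intro x hx
    have h1 : g x - (g x + F (gj x)) = -(F (gj x)) := by abel
    rw [h1, norm_neg]
    have h2 := hFsmall (gj x) ⟨x, hx, rfl⟩
    linarith
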